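/- Quasi-Banach Young inequality on a lattice: let p₀, p₁, p₂ ∈ (0,∞] satisfy 1/p₀ ≤ 1/p₁ + 1/p₂ − max(1, 1/p₁, 1/p₂), and let ω₀(j₁+j₂) ≤ ω₁(j₁) ω₂(j₂) for all j₁, j₂ in a lattice Λ. Then for finitely supported a₁, a₂ on Λ, ‖a₁ * a₂‖_{ℓ^{p₀}_{(ω₀)}} ≤ ‖a₁‖_{ℓ^{p₁}_{(ω₁)}} ‖a₂‖_{ℓ^{p₂}_{(ω₂)}}, where (a₁*a₂)(j) = ∑_{k∈Λ} a₁(j−k) a₂(k). -/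

import Mathlib

open MeasureTheory
open scoped ENNReal

/-- Weighted `ℓ^p` quasi-norm on a countable index set, via `eLpNorm` with
counting measure. -/
noncomputable def lqNorm {ι : Type*} (a : ι → ℂ) (q : ℝ≥0∞) : ℝ≥0∞ :=
  letI : MeasurableSpace ι := ⊤
  eLpNorm a q Measure.count

open Function
open scoped NNReal

section prelim
variable {ι : Type*}

/-- Hölder inequality for `tsum` in `ℝ≥0∞`. -/
lemma my_tsum_holder (f g : ι → ℝ≥0∞) {p q : ℝ} (hpq : p.HolderConjugate q) :
    ∑' i, f i * g i ≤ (∑' i, f i ^ p) ^ (1 / p) * (∑' i, g i ^ q) ^ (1 / q) := by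
  letI : MeasurableSpace ι := ⊤
  haveI : MeasurableSingletonClass ι := ⟨fun _ => MeasurableSpace.measurableSet_top⟩
  have hm : ∀ h : ι → ℝ≥0∞, Measurable h := fun h _ _ => MeasurableSpace.measurableSet_top
  have := ENNReal.lintegral_mul_le_Lp_mul_Lq (Measure.count : Measure ι) hpq
    ((hm f).aemeasurable) ((hm g).aemeasurable)
  simpa [lintegral_count] using this

/-- Minkowski inequality for `tsum` in `ℝ≥0∞`. -/
lemma my_tsum_minkowski (f g : ι → ℝ≥0∞) {p : ℝ} (hp : 1 ≤ p) :
    (∑' i, (f i + g i) ^ p) ^ (1 / p) ≤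
      (∑' i, f i ^ p) ^ (1 / p) + (∑' i, g i ^ p) ^ (1 / p) := by
  letI : MeasurableSpace ι := ⊤
  haveI : MeasurableSingletonClass ι := ⟨fun _ => MeasurableSpace.measurableSet_top⟩
  have hm : ∀ h : ι → ℝ≥0∞, Measurable h := fun h _ _ => MeasurableSpace.measurableSet_top
  have := ENNReal.lintegral_Lp_add_le (μ := (Measure.count : Measure ι))
    ((hm f).aemeasurable) ((hm g).aemeasurable) hp
  simpa [lintegral_count] using this
noncomputable def Np (p : ℝ≥0∞) (f : ι → ℝ≥0∞) : ℝ≥0∞ :=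
  if p = ∞ then ⨆ j, f j else (∑' j, f j ^ p.toReal) ^ (1 / p.toReal)

lemma Np_top (f : ι → ℝ≥0∞) : Np ∞ f = ⨆ j, f j := if_pos rfl

lemma Np_of_ne_top {p : ℝ≥0∞} (hp : p ≠ ∞) (f : ι → ℝ≥0∞) :
    Np p f = (∑' j, f j ^ p.toReal) ^ (1 / p.toReal) := if_neg hp

lemma Np_one (f : ι → ℝ≥0∞) : Np 1 f = ∑' j, f j := by
  rw [Np_of_ne_top ENNReal.one_ne_top]; simp

lemma Np_mono {p : ℝ≥0∞} {f g : ι → ℝ≥0∞} (h : ∀ j, f j ≤ g j) : Np p f ≤ Np p g := by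
  rcases eq_or_ne p ∞ with rfl | hp
  · rw [Np_top, Np_top]; exact iSup_mono h
  · rw [Np_of_ne_top hp, Np_of_ne_top hp]
    exact ENNReal.rpow_le_rpow (ENNReal.tsum_le_tsum fun j =>
      ENNReal.rpow_le_rpow (h j) ENNReal.toReal_nonneg) (by positivity)

lemma Np_zero {p : ℝ≥0∞} (hp : p ≠ 0) : Np p (fun _ : ι => 0) = 0 := by
  rcases eq_or_ne p ∞ with rfl | htop
  · simp [Np_top]
  · have h0 : 0 < p.toReal := ENNReal.toReal_pos hp htop
    rw [Np_of_ne_top htop]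
    simp only [ENNReal.zero_rpow_of_pos h0, tsum_zero]
    exact ENNReal.zero_rpow_of_pos (one_div_pos.2 h0)

/-- `∑ u^e ≤ (∑ u)^e` for `1 ≤ e`. -/
lemma tsum_rpow_le_rpow_tsum_of_one_le (u : ι → ℝ≥0∞) {e : ℝ} (he : 1 ≤ e) :
    ∑' i, u i ^ e ≤ (∑' i, u i) ^ e := by
  set S := ∑' i, u i with hS
  rcases eq_or_ne S ∞ with hStop | hStop
  · rw [hStop, ENNReal.top_rpow_of_pos (by linarith)]; exact le_top
  rcases eq_or_ne S 0 with hS0 | hS0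
  · have : ∀ i, u i = 0 := by
      rw [hS, ENNReal.tsum_eq_zero] at hS0; exact hS0
    simp [this, ENNReal.zero_rpow_of_pos (by linarith : (0:ℝ) < e)]
  calc ∑' i, u i ^ e ≤ ∑' i, S ^ (e - 1) * u i := by
        refine ENNReal.tsum_le_tsum fun i => ?_
        rcases eq_or_ne (u i) 0 with h0 | h0
        · simp [h0, ENNReal.zero_rpow_of_pos (by linarith : (0:ℝ) < e)]
        · have hui : u i ≠ ∞ := ne_top_of_le_ne_top hStop (ENNReal.le_tsum i)
          have : u i ^ e = u i ^ (e - 1) * u i := by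
            calc u i ^ e = u i ^ (e - 1 + 1) := by ring_nf
              _ = u i ^ (e - 1) * u i ^ (1:ℝ) := ENNReal.rpow_add _ _ h0 hui
              _ = u i ^ (e - 1) * u i := by rw [ENNReal.rpow_one]
          rw [this]
          exact mul_le_mul_left (ENNReal.rpow_le_rpow (ENNReal.le_tsum i) (by linarith)) _
    _ = S ^ (e - 1) * S := ENNReal.tsum_mul_left
    _ = S ^ e := by
        calc S ^ (e - 1) * S = S ^ (e - 1) * S ^ (1:ℝ) := by rw [ENNReal.rpow_one]
          _ = S ^ (e - 1 + 1) := (ENNReal.rpow_add _ _ hS0 hStop).symm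
          _ = S ^ e := by ring_nf

/-- `(∑ u)^e ≤ ∑ u^e` for `e ≤ 1`, finitely supported. -/
lemma rpow_tsum_le_tsum_rpow (u : ι → ℝ≥0∞) {e : ℝ} (he0 : 0 < e) (he1 : e ≤ 1)
    (hu : (support u).Finite) :
    (∑' i, u i) ^ e ≤ ∑' i, u i ^ e := by
  classical
  have h1 : ∑' i, u i = ∑ i ∈ hu.toFinset, u i := by
    refine tsum_eq_sum fun b hb => ?_
    by_contra h
    exact hb (hu.mem_toFinset.2 h)
  rw [h1]
  refine le_trans ?_ (ENNReal.sum_le_tsum hu.toFinset)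
  induction hu.toFinset using Finset.induction with
  | empty => simp [ENNReal.zero_rpow_of_pos he0]
  | insert _ _ hnot ih =>
      rw [Finset.sum_insert hnot, Finset.sum_insert hnot]
      exact le_trans (ENNReal.rpow_add_le_add_rpow _ _ he0.le he1) (by gcongr)

lemma Np_anti {p q : ℝ≥0∞} (hq0 : q ≠ 0) (hqp : q ≤ p) (f : ι → ℝ≥0∞) :
    Np p f ≤ Np q f := by
  rcases eq_or_ne q ∞ with rfl | hqtop
  · have : p = ∞ := top_le_iff.mp hqp
    simp [this]
  have hq' : 0 < q.toReal := ENNReal.toReal_pos hq0 hqtop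
  rcases eq_or_ne p ∞ with rfl | hptop
  · rw [Np_top, Np_of_ne_top hqtop]
    refine iSup_le fun j => ?_
    have : f j = (f j ^ q.toReal) ^ (1 / q.toReal) := by
      rw [one_div, ENNReal.rpow_rpow_inv hq'.ne']
    rw [this]
    exact ENNReal.rpow_le_rpow (ENNReal.le_tsum j) (by positivity)
  · have hp0 : p ≠ 0 := fun h => hq0 (le_zero_iff.mp (h ▸ hqp))
    have hp' : 0 < p.toReal := ENNReal.toReal_pos hp0 hptop
    have hpq : q.toReal ≤ p.toReal := ENNReal.toReal_mono hptop hqp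
    rw [Np_of_ne_top hqtop, Np_of_ne_top hptop]
    have he : 1 ≤ p.toReal / q.toReal := (one_le_div hq').2 hpq
    have key : ∑' j, f j ^ p.toReal ≤ (∑' j, f j ^ q.toReal) ^ (p.toReal / q.toReal) := by
      have := tsum_rpow_le_rpow_tsum_of_one_le (fun j => f j ^ q.toReal) he
      refine le_trans (le_of_eq ?_) this
      congr 1; funext j
      rw [← ENNReal.rpow_mul]
      congr 1; field_simp
    calc (∑' j, f j ^ p.toReal) ^ (1 / p.toReal)
        ≤ ((∑' j, f j ^ q.toReal) ^ (p.toReal / q.toReal)) ^ (1 / p.toReal) :=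
          ENNReal.rpow_le_rpow key (by positivity)
      _ = (∑' j, f j ^ q.toReal) ^ (1 / q.toReal) := by
          rw [← ENNReal.rpow_mul]; congr 1; field_simp

lemma my_iSup_rpow (f : ι → ℝ≥0∞) {e : ℝ} (he : 0 < e) :
    (⨆ i, f i) ^ e = ⨆ i, f i ^ e := by
  have mono : ∀ (g : ι → ℝ≥0∞) {c : ℝ}, 0 < c → (⨆ i, g i ^ c) ≤ (⨆ i, g i) ^ c :=
    fun g c hc => iSup_le fun i => ENNReal.rpow_le_rpow (le_iSup g i) hc.le
  refine le_antisymm ?_ (mono f he)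
  have h2 := mono (fun i => f i ^ e) (one_div_pos.2 he)
  have h3 : ∀ i, ((f i) ^ e) ^ (1/e) = f i := fun i => by
    rw [one_div, ENNReal.rpow_rpow_inv he.ne']
  simp only [h3] at h2
  calc (⨆ i, f i) ^ e ≤ ((⨆ i, f i ^ e) ^ (1/e)) ^ e := ENNReal.rpow_le_rpow h2 he.le
    _ = ⨆ i, f i ^ e := by rw [one_div, ENNReal.rpow_inv_rpow he.ne']

end prelim

section group
variable {ι : Type*} {G : Type*} [AddCommGroup G]

/-- `Np (p/t) (f ^ t.toReal) = (Np p f) ^ t.toReal`. -/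
lemma Np_rpow {p t : ℝ≥0∞} (hp : p ≠ 0) (ht0 : t ≠ 0) (httop : t ≠ ∞) (f : ι → ℝ≥0∞) :
    Np (p / t) (fun j => f j ^ t.toReal) = (Np p f) ^ t.toReal := by
  have hτ : 0 < t.toReal := ENNReal.toReal_pos ht0 httop
  rcases eq_or_ne p ∞ with rfl | hptop
  · have : (∞ : ℝ≥0∞) / t = ∞ := ENNReal.top_div_of_ne_top httop
    rw [this, Np_top, Np_top, my_iSup_rpow f hτ]
  · have hpt_top : p / t ≠ ∞ := by
      simp only [Ne, ENNReal.div_eq_top]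
      push_neg
      exact ⟨fun _ => ht0, fun h => absurd h hptop⟩
    have hpt_toReal : (p / t).toReal = p.toReal / t.toReal := ENNReal.toReal_div p t
    have hpr : 0 < p.toReal := ENNReal.toReal_pos hp hptop
    rw [Np_of_ne_top hpt_top, Np_of_ne_top hptop, hpt_toReal]
    have h1 : ∀ j, (f j ^ t.toReal) ^ (p.toReal / t.toReal) = f j ^ p.toReal := fun j => by
      rw [← ENNReal.rpow_mul]; congr 1; field_simp
    simp only [h1]
    rw [← ENNReal.rpow_mul]
    congr 1
    field_simp

lemma Np_const_mul {p : ℝ≥0∞} (hp : p ≠ 0) (c : ℝ≥0∞) (f : ι → ℝ≥0∞) :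
    Np p (fun j => c * f j) = c * Np p f := by
  rcases eq_or_ne p ∞ with rfl | hptop
  · rw [Np_top, Np_top]
    exact (ENNReal.mul_iSup c (fun j => f j)).symm
  · have hpr : 0 < p.toReal := ENNReal.toReal_pos hp hptop
    rw [Np_of_ne_top hptop, Np_of_ne_top hptop]
    have h1 : ∀ j, (c * f j) ^ p.toReal = c ^ p.toReal * f j ^ p.toReal := fun j =>
      ENNReal.mul_rpow_of_nonneg _ _ hpr.le
    simp only [h1]
    rw [ENNReal.tsum_mul_left, ENNReal.mul_rpow_of_nonneg _ _ (one_div_pos.2 hpr).le,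
      ← ENNReal.rpow_mul]
    congr 1
    rw [mul_one_div, div_self hpr.ne', ENNReal.rpow_one]

lemma Np_translate (p : ℝ≥0∞) (f : G → ℝ≥0∞) (k : G) :
    Np p (fun j => f (j - k)) = Np p f := by
  rcases eq_or_ne p ∞ with rfl | hptop
  · rw [Np_top, Np_top]
    exact (Equiv.subRight k).iSup_congr (fun j => rfl)
  · rw [Np_of_ne_top hptop, Np_of_ne_top hptop]
    congr 1
    exact (Equiv.subRight k).tsum_eq fun j => f j ^ p.toReal

lemma tsum_translate (f : G → ℝ≥0∞) (k : G) : ∑' j, f (j - k) = ∑' j, f j :=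
  (Equiv.subRight k).tsum_eq f

lemma conv_symm (f g : G → ℝ≥0∞) (j : G) :
    ∑' k, f (j - k) * g k = ∑' k, g (j - k) * f k := by
  calc ∑' k, f (j - k) * g k = ∑' k, f (j - (j - k)) * g (j - k) :=
        ((Equiv.subLeft j).tsum_eq fun k => f (j - k) * g k).symm
    _ = ∑' k, g (j - k) * f k := by
        congr 1; funext k; rw [sub_sub_cancel, mul_comm]

lemma tsum_ne_top_of_finite {f : ι → ℝ≥0∞} (hs : (support f).Finite)
    (hf : ∀ j, f j ≠ ∞) : ∑' j, f j ≠ ∞ := by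
  classical
  have h1 : ∑' i, f i = ∑ i ∈ hs.toFinset, f i := by
    refine tsum_eq_sum fun b hb => ?_
    by_contra h
    exact hb (hs.mem_toFinset.2 h)
  rw [h1]
  exact (ENNReal.sum_lt_top.2 fun a _ => (hf a).lt_top).ne

lemma tsum_translate' (f : G → ℝ≥0∞) (j : G) : ∑' k, f (j - k) = ∑' k, f k :=
  (Equiv.subLeft j).tsum_eq f

lemma Np_add_le {q : ℝ≥0∞} (hq1 : 1 ≤ q) (f g : G → ℝ≥0∞) :
    Np q (fun j => f j + g j) ≤ Np q f + Np q g := by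
  rcases eq_or_ne q ∞ with rfl | hqtop
  · simp only [Np_top]
    exact iSup_le fun j => add_le_add (le_iSup f j) (le_iSup g j)
  · have h1 : 1 ≤ q.toReal := by
      have := ENNReal.toReal_mono hqtop hq1
      simpa using this
    simp only [Np_of_ne_top hqtop]
    exact my_tsum_minkowski f g h1

lemma young_one {q : ℝ≥0∞} (hq1 : 1 ≤ q) (f g : G → ℝ≥0∞)
    (hgs : (support g).Finite) :
    Np q (fun j => ∑' k, f (j - k) * g k) ≤ Np q f * Np 1 g := by
  classical
  have hq0 : q ≠ 0 := fun h => by simp [h] at hq1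
  have key : ∀ s : Finset G, Np q (fun j => ∑ k ∈ s, f (j - k) * g k)
      ≤ (∑ k ∈ s, g k) * Np q f := by
    intro s
    induction s using Finset.induction with
    | empty => simpa using le_of_eq (Np_zero hq0)
    | @insert a t hnot ih =>
        have e1 : (fun j => ∑ k ∈ insert a t, f (j - k) * g k)
            = fun j => (f (j - a) * g a) + ∑ k ∈ t, f (j - k) * g k := by
          funext j; rw [Finset.sum_insert hnot]
        rw [e1, Finset.sum_insert hnot]
        refine le_trans (Np_add_le hq1 _ _) ?_
        rw [add_mul]
        refine add_le_add (le_of_eq ?_) ih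
        have e2 : (fun j => f (j - a) * g a) = fun j => g a * f (j - a) := by
          funext j; rw [mul_comm]
        rw [e2, Np_const_mul hq0, Np_translate]
  have hconv : (fun j => ∑' k, f (j - k) * g k)
      = fun j => ∑ k ∈ hgs.toFinset, f (j - k) * g k := by
    funext j
    refine tsum_eq_sum fun b hb => ?_
    have : g b = 0 := by by_contra h; exact hb (hgs.mem_toFinset.2 h)
    rw [this, mul_zero]
  have hsum : (∑ k ∈ hgs.toFinset, g k) = ∑' k, g k := by
    refine (tsum_eq_sum fun b hb => ?_).symm
    by_contra h; exact hb (hgs.mem_toFinset.2 h)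
  rw [hconv, Np_one, mul_comm (Np q f), ← hsum]
  exact key _

lemma young_top_one (f g : G → ℝ≥0∞) :
    Np ∞ (fun j => ∑' k, f (j - k) * g k) ≤ Np ∞ f * Np 1 g := by
  rw [Np_top, Np_one]
  refine iSup_le fun j => ?_
  calc ∑' k, f (j - k) * g k ≤ ∑' k, (⨆ i, f i) * g k :=
        ENNReal.tsum_le_tsum fun k => mul_le_mul_left (le_iSup f (j - k)) _
    _ = (⨆ i, f i) * ∑' k, g k := ENNReal.tsum_mul_left
    _ = Np ∞ f * ∑' k, g k := by rw [Np_top]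

lemma young_conj {q₁ q₂ : ℝ≥0∞} (h₁top : q₁ ≠ ∞) (h₂top : q₂ ≠ ∞)
    (hA : 1 < q₁.toReal)
    (hsum : 1 / q₁.toReal + 1 / q₂.toReal = 1) (f g : G → ℝ≥0∞) :
    Np ∞ (fun j => ∑' k, f (j - k) * g k) ≤ Np q₁ f * Np q₂ g := by
  have hconj : q₁.toReal.HolderConjugate q₂.toReal :=
    Real.holderConjugate_iff.2 ⟨hA, by rw [← one_div, ← one_div]; exact hsum⟩
  rw [Np_top, Np_of_ne_top h₁top, Np_of_ne_top h₂top]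
  refine iSup_le fun j => ?_
  refine le_trans (my_tsum_holder (fun k => f (j - k)) g hconj) (le_of_eq ?_)
  congr 2
  exact tsum_translate' (fun m => f m ^ q₁.toReal) j

set_option maxHeartbeats 1000000 in
/-- pointwise splitting for the triple Hölder argument -/
lemma key_pt {A B C : ℝ} (hA : 0 < A) (hB : 0 < B) (hC : 0 < C)
    (x y : ℝ≥0∞) (hx : x ≠ ∞) (hy : y ≠ ∞) :
    x * y ≤ (x ^ A * y ^ B) ^ (1 / C) * (x ^ (1 - A / C) * y ^ (1 - B / C)) := by
  rcases eq_or_ne x 0 with rfl | hx0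
  · simp [ENNReal.zero_rpow_of_pos hA, ENNReal.zero_rpow_of_pos (one_div_pos.2 hC)]
  rcases eq_or_ne y 0 with rfl | hy0
  · simp [ENNReal.zero_rpow_of_pos hB, ENNReal.zero_rpow_of_pos (one_div_pos.2 hC)]
  refine le_of_eq ?_
  rw [ENNReal.mul_rpow_of_nonneg _ _ (one_div_pos.2 hC).le, ← ENNReal.rpow_mul,
    ← ENNReal.rpow_mul, mul_mul_mul_comm, ← ENNReal.rpow_add _ _ hx0 hx,
    ← ENNReal.rpow_add _ _ hy0 hy]
  have e1 : A * (1 / C) + (1 - A / C) = 1 := by field_simp; ring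
  have e2 : B * (1 / C) + (1 - B / C) = 1 := by field_simp; ring
  rw [e1, e2, ENNReal.rpow_one, ENNReal.rpow_one]

set_option maxHeartbeats 1000000 in
lemma young_main (f g : G → ℝ≥0∞) (hfs : (support f).Finite) (hgs : (support g).Finite)
    (hf : ∀ j, f j ≠ ∞) (hg : ∀ j, g j ≠ ∞) {q₀ q₁ q₂ : ℝ≥0∞}
    (h₀top : q₀ ≠ ∞) (h₁top : q₁ ≠ ∞) (h₂top : q₂ ≠ ∞)
    (hA1 : 1 < q₁.toReal) (hB1 : 1 < q₂.toReal)
    (hrel : 1 / q₀.toReal = 1 / q₁.toReal + 1 / q₂.toReal - 1)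
    (hc0 : 0 < 1 / q₀.toReal) :
    Np q₀ (fun j => ∑' k, f (j - k) * g k) ≤ Np q₁ f * Np q₂ g := by
  classical
  set A := q₁.toReal with hAdef
  set B := q₂.toReal with hBdef
  set C := q₀.toReal with hCdef
  have hA : 0 < A := lt_trans one_pos hA1
  have hB : 0 < B := lt_trans one_pos hB1
  have hC : 0 < C := one_div_pos.mp hc0
  have hrelC : 1 / C = 1 / A + 1 / B - 1 := hrel
  have haux1 : 1 / C < 1 / A := by
    have : 1 / B < 1 := by rw [div_lt_one hB]; exact hB1
    linarith
  have haux2 : 1 / C < 1 / B := by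
    have : 1 / A < 1 := by rw [div_lt_one hA]; exact hA1
    linarith
  have hC1 : 1 < C := by
    have h1 : 1 / A < 1 := by rw [div_lt_one hA]; exact hA1
    have : 1 / C < 1 := lt_trans haux1 h1
    rwa [div_lt_one hC] at this
  have hq₀0 : q₀ ≠ 0 := by
    intro h
    rw [hCdef, h] at hc0
    simp at hc0
  -- trivial cases f = 0 or g = 0
  by_cases hfz : ∀ j, f j = 0
  · have : (fun j => ∑' k, f (j - k) * g k) = fun _ : G => 0 := by
      funext j; simp [hfz]
    rw [this, Np_zero hq₀0]
    exact zero_le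
  by_cases hgz : ∀ j, g j = 0
  · have : (fun j => ∑' k, f (j - k) * g k) = fun _ : G => 0 := by
      funext j; simp [hgz]
    rw [this, Np_zero hq₀0]
    exact zero_le
  push_neg at hfz hgz
  set Sf := ∑' j, f j ^ A with hSfdef
  set Sg := ∑' j, g j ^ B with hSgdef
  have hSf0 : Sf ≠ 0 := by
    obtain ⟨j, hj⟩ := hfz
    intro h
    rw [hSfdef, ENNReal.tsum_eq_zero] at h
    exact hj (by simpa [ENNReal.rpow_eq_zero_iff, hA, hf j, hA.not_gt] using h j)
  have hSg0 : Sg ≠ 0 := by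
    obtain ⟨j, hj⟩ := hgz
    intro h
    rw [hSgdef, ENNReal.tsum_eq_zero] at h
    exact hj (by simpa [ENNReal.rpow_eq_zero_iff, hB, hg j, hB.not_gt] using h j)
  have hSftop : Sf ≠ ∞ := by
    refine tsum_ne_top_of_finite (hfs.subset fun j hj => ?_)
      (fun j => ENNReal.rpow_ne_top_of_nonneg hA.le (hf j))
    simp only [mem_support] at hj ⊢
    intro h; exact hj (by simp [h, ENNReal.zero_rpow_of_pos hA])
  have hSgtop : Sg ≠ ∞ := by
    refine tsum_ne_top_of_finite (hgs.subset fun j hj => ?_)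
      (fun j => ENNReal.rpow_ne_top_of_nonneg hB.le (hg j))
    simp only [mem_support] at hj ⊢
    intro h; exact hj (by simp [h, ENNReal.zero_rpow_of_pos hB])
  -- conjugate exponents
  set C' := C / (C - 1) with hC'def
  have hCC' : C.HolderConjugate C' := Real.HolderConjugate.conjExponent hC1
  have hC'0 : 0 < C' := hCC'.symm.pos
  set γ₁ := 1 - A / C with hγ₁def
  set γ₂ := 1 - B / C with hγ₂def
  have hAC : A < C := by
    rw [div_lt_div_iff₀ hC hA, one_mul, one_mul] at haux1; exact haux1
  have hBC : B < C := by
    rw [div_lt_div_iff₀ hC hB, one_mul, one_mul] at haux2; exact haux2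
  have hγ₁ : 0 < γ₁ := by rw [hγ₁def, sub_pos, div_lt_one hC]; exact hAC
  have hγ₂ : 0 < γ₂ := by rw [hγ₂def, sub_pos, div_lt_one hC]; exact hBC
  set P := A / (γ₁ * C') with hPdef
  set Q := B / (γ₂ * C') with hQdef
  have hP0 : 0 < P := div_pos hA (mul_pos hγ₁ hC'0)
  have hQ0 : 0 < Q := div_pos hB (mul_pos hγ₂ hC'0)
  have hC'val : C' = C / (C - 1) := rfl
  have hCne : C - 1 ≠ 0 := ne_of_gt (by linarith)
  have hinvP : 1 / P = γ₁ * C' / A := by rw [hPdef, one_div_div]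
  have hinvQ : 1 / Q = γ₂ * C' / B := by rw [hQdef, one_div_div]
  have hAA : A / C / A = 1 / C := by
    rw [div_div, mul_comm C A, ← div_div, div_self hA.ne']
  have hBB : B / C / B = 1 / C := by
    rw [div_div, mul_comm C B, ← div_div, div_self hB.ne']
  have eγ₁ : γ₁ / A = 1 / A - 1 / C := by
    rw [hγ₁def, sub_div, hAA]
  have eγ₂ : γ₂ / B = 1 / B - 1 / C := by
    rw [hγ₂def, sub_div, hBB]
  have hsum' : γ₁ / A + γ₂ / B = 1 - 1 / C := by
    rw [eγ₁, eγ₂]; linarith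
  have hPQsum : 1 / P + 1 / Q = 1 := by
    rw [hinvP, hinvQ]
    have e : γ₁ * C' / A + γ₂ * C' / B = C' * (γ₁ / A + γ₂ / B) := by ring
    rw [e, hsum', hC'val]
    rw [div_mul_eq_mul_div, div_eq_one_iff_eq (by intro h; exact hCne (by linarith) : C - 1 ≠ 0)]
    field_simp
  have hinvQpos : 0 < 1 / Q := by positivity
  have hP1 : 1 < P := by
    have : 1 / P < 1 := by linarith
    rwa [div_lt_one hP0] at this
  have hPQ : P.HolderConjugate Q :=
    Real.holderConjugate_iff.2 ⟨hP1, by rw [← one_div, ← one_div]; exact hPQsum⟩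
  have hexpP : γ₁ * C' * P = A := by
    rw [hPdef]; rw [mul_div_assoc']; rw [mul_comm (γ₁ * C') A, mul_div_assoc,
      div_self (ne_of_gt (mul_pos hγ₁ hC'0)), mul_one]
  have hexpQ : γ₂ * C' * Q = B := by
    rw [hQdef]; rw [mul_div_assoc']; rw [mul_comm (γ₂ * C') B, mul_div_assoc,
      div_self (ne_of_gt (mul_pos hγ₂ hC'0)), mul_one]
  -- the pointwise sum bound
  set T : G → ℝ≥0∞ := fun j => ∑' k, f (j - k) ^ A * g k ^ B with hTdef
  set M : ℝ≥0∞ := Sf ^ (γ₁ / A) * Sg ^ (γ₂ / B) with hMdef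
  have step : ∀ j : G, (∑' k, f (j - k) * g k) ≤ T j ^ (1 / C) * M := by
    intro j
    have s1 : (∑' k, f (j - k) * g k)
        ≤ ∑' k, (f (j - k) ^ A * g k ^ B) ^ (1 / C) * (f (j - k) ^ γ₁ * g k ^ γ₂) :=
      ENNReal.tsum_le_tsum fun k => key_pt hA hB hC _ _ (hf _) (hg _)
    have s2 : (∑' k, (f (j - k) ^ A * g k ^ B) ^ (1 / C) * (f (j - k) ^ γ₁ * g k ^ γ₂))
        ≤ (∑' k, ((f (j - k) ^ A * g k ^ B) ^ (1 / C)) ^ C) ^ (1 / C) *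
          (∑' k, (f (j - k) ^ γ₁ * g k ^ γ₂) ^ C') ^ (1 / C') :=
      my_tsum_holder _ _ hCC'
    have e3 : ∀ k : G, ((f (j - k) ^ A * g k ^ B) ^ (1 / C)) ^ C
        = f (j - k) ^ A * g k ^ B := fun k => by
      rw [one_div, ENNReal.rpow_inv_rpow hC.ne']
    have e4 : ∀ k : G, (f (j - k) ^ γ₁ * g k ^ γ₂) ^ C'
        = f (j - k) ^ (γ₁ * C') * g k ^ (γ₂ * C') := fun k => by
      rw [ENNReal.mul_rpow_of_nonneg _ _ hC'0.le, ← ENNReal.rpow_mul, ← ENNReal.rpow_mul]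
    simp only [e3, e4] at s2
    have s3 : (∑' k, f (j - k) ^ (γ₁ * C') * g k ^ (γ₂ * C'))
        ≤ (∑' k, (f (j - k) ^ (γ₁ * C')) ^ P) ^ (1 / P) *
          (∑' k, (g k ^ (γ₂ * C')) ^ Q) ^ (1 / Q) := my_tsum_holder _ _ hPQ
    have e5 : ∀ k : G, (f (j - k) ^ (γ₁ * C')) ^ P = f (j - k) ^ A := fun k => by
      rw [← ENNReal.rpow_mul, hexpP]
    have e6 : ∀ k : G, (g k ^ (γ₂ * C')) ^ Q = g k ^ B := fun k => by
      rw [← ENNReal.rpow_mul, hexpQ]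
    simp only [e5, e6] at s3
    have e7 : (∑' k, f (j - k) ^ A) = Sf := tsum_translate' (fun m => f m ^ A) j
    rw [e7] at s3
    -- combine
    refine le_trans s1 (le_trans s2 ?_)
    refine mul_le_mul_right (le_trans (ENNReal.rpow_le_rpow s3 (by positivity)) ?_) _
    rw [ENNReal.mul_rpow_of_nonneg _ _ (by positivity : (0:ℝ) ≤ 1 / C'),
      ← ENNReal.rpow_mul, ← ENNReal.rpow_mul, hMdef]
    have e8 : 1 / P * (1 / C') = γ₁ / A := by
      rw [hinvP, div_mul_div_comm, mul_one, mul_comm A C', ← div_div,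
        mul_div_assoc, div_self hC'0.ne', mul_one]
    have e9 : 1 / Q * (1 / C') = γ₂ / B := by
      rw [hinvQ, div_mul_div_comm, mul_one, mul_comm B C', ← div_div,
        mul_div_assoc, div_self hC'0.ne', mul_one]
    rw [e8, e9]
  -- sum the C-th powers
  have hTsum : ∑' j, T j = Sf * Sg := by
    rw [hTdef]
    rw [ENNReal.tsum_comm]
    have : ∀ k : G, ∑' j, f (j - k) ^ A * g k ^ B = Sf * g k ^ B := by
      intro k
      rw [ENNReal.tsum_mul_right]
      congr 1
      exact tsum_translate (fun m => f m ^ A) k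
    simp only [this]
    rw [ENNReal.tsum_mul_left, mul_comm Sf]
  -- conclude
  have hb : ∀ j : G, (∑' k, f (j - k) * g k) ^ C ≤ T j * M ^ C := by
    intro j
    calc (∑' k, f (j - k) * g k) ^ C ≤ (T j ^ (1 / C) * M) ^ C :=
          ENNReal.rpow_le_rpow (step j) hC.le
      _ = T j * M ^ C := by
          rw [ENNReal.mul_rpow_of_nonneg _ _ hC.le, one_div, ENNReal.rpow_inv_rpow hC.ne']
  have hfin : Np q₀ (fun j => ∑' k, f (j - k) * g k) ≤ (Sf * Sg) ^ (1 / C) * M := by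
    rw [Np_of_ne_top h₀top]
    calc (∑' j, (∑' k, f (j - k) * g k) ^ C) ^ (1 / C)
        ≤ (∑' j, T j * M ^ C) ^ (1 / C) :=
          ENNReal.rpow_le_rpow (ENNReal.tsum_le_tsum hb) (by positivity)
      _ = ((Sf * Sg) * M ^ C) ^ (1 / C) := by rw [ENNReal.tsum_mul_right, hTsum]
      _ = (Sf * Sg) ^ (1 / C) * M := by
          rw [ENNReal.mul_rpow_of_nonneg _ _ (by positivity : (0:ℝ) ≤ 1 / C), one_div,
            ENNReal.rpow_rpow_inv hC.ne']
  have eA : 1 / C + γ₁ / A = 1 / A := by rw [eγ₁]; ring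
  have eB : 1 / C + γ₂ / B = 1 / B := by rw [eγ₂]; ring
  have efin : (Sf * Sg) ^ (1 / C) * M = Sf ^ (1 / A) * Sg ^ (1 / B) := by
    rw [hMdef, ENNReal.mul_rpow_of_nonneg _ _ (by positivity : (0:ℝ) ≤ 1 / C),
      mul_mul_mul_comm, ← ENNReal.rpow_add _ _ hSf0 hSftop,
      ← ENNReal.rpow_add _ _ hSg0 hSgtop, eA, eB]
  rw [Np_of_ne_top h₁top, Np_of_ne_top h₂top]
  exact le_of_le_of_eq hfin efin

/-- Classical Young inequality, `1 ≤ q₁, q₂ ≤ ∞`, `1/q₀ + 1 = 1/q₁ + 1/q₂`. -/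
lemma young (f g : G → ℝ≥0∞) (hfs : (support f).Finite) (hgs : (support g).Finite)
    (hf : ∀ j, f j ≠ ∞) (hg : ∀ j, g j ≠ ∞) {q₀ q₁ q₂ : ℝ≥0∞}
    (hq₁ : 1 ≤ q₁) (hq₂ : 1 ≤ q₂) (hq : 1 / q₀ + 1 = 1 / q₁ + 1 / q₂) :
    Np q₀ (fun j => ∑' k, f (j - k) * g k) ≤ Np q₁ f * Np q₂ g := by
  have hq₁0 : q₁ ≠ 0 := fun h => by simp [h] at hq₁
  have hq₂0 : q₂ ≠ 0 := fun h => by simp [h] at hq₂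
  have hinv₁ : 1 / q₁ ≤ 1 := by
    rw [one_div]; exact ENNReal.inv_le_one.2 hq₁
  have hinv₂ : 1 / q₂ ≤ 1 := by
    rw [one_div]; exact ENNReal.inv_le_one.2 hq₂
  rcases eq_or_ne q₁ ∞ with rfl | h₁top
  · -- q₁ = ∞ : forces q₂ = 1, q₀ = ∞
    rw [show (1:ℝ≥0∞)/∞ = 0 by simp, zero_add] at hq
    have hq₀ : 1 / q₀ = 0 := by
      by_contra h
      have h1 : (1:ℝ≥0∞) < 1 + 1 / q₀ := ENNReal.lt_add_right ENNReal.one_ne_top h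
      rw [add_comm, hq] at h1
      exact absurd hinv₂ (not_le.2 h1)
    have hq₂1 : q₂ = 1 := by
      rw [hq₀, zero_add, one_div, eq_comm, ENNReal.inv_eq_one] at hq
      exact hq
    have hq₀top : q₀ = ∞ := by
      rw [one_div, ENNReal.inv_eq_zero] at hq₀
      exact hq₀
    subst hq₂1 hq₀top
    exact young_top_one f g
  rcases eq_or_ne q₂ ∞ with rfl | h₂top
  · -- q₂ = ∞ : symmetric
    rw [show (1:ℝ≥0∞)/∞ = 0 by simp, add_zero] at hq
    have hq₀ : 1 / q₀ = 0 := by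
      by_contra h
      have h1 : (1:ℝ≥0∞) < 1 + 1 / q₀ := ENNReal.lt_add_right ENNReal.one_ne_top h
      rw [add_comm, hq] at h1
      exact absurd hinv₁ (not_le.2 h1)
    have hq₁1 : q₁ = 1 := by
      rw [hq₀, zero_add, one_div, eq_comm, ENNReal.inv_eq_one] at hq
      exact hq
    have hq₀top : q₀ = ∞ := by
      rw [one_div, ENNReal.inv_eq_zero] at hq₀
      exact hq₀
    subst hq₁1 hq₀top
    have e : (fun j => ∑' k, f (j - k) * g k) = fun j => ∑' k, g (j - k) * f k := by
      funext j; exact conv_symm f g j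
    rw [e, mul_comm]
    exact young_top_one g f
  -- both finite
  have h₁R : 1 < q₁.toReal ∨ q₁ = 1 := by
    rcases eq_or_lt_of_le hq₁ with h | h
    · exact Or.inr h.symm
    · left
      have := ENNReal.toReal_lt_toReal (by simp) h₁top |>.2 h
      simpa using this
  have h₂R : 1 < q₂.toReal ∨ q₂ = 1 := by
    rcases eq_or_lt_of_le hq₂ with h | h
    · exact Or.inr h.symm
    · left
      have := ENNReal.toReal_lt_toReal (by simp) h₂top |>.2 h
      simpa using this
  rcases h₂R with h₂R | rfl
  swap
  · -- q₂ = 1 : q₀ = q₁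
    have : 1 / q₀ = 1 / q₁ := by
      have := hq
      rw [show (1:ℝ≥0∞)/1 = 1 by norm_num] at this
      rw [ENNReal.add_left_inj (by simp : (1:ℝ≥0∞) ≠ ∞)] at this
      exact this
    have hq₀ : q₀ = q₁ := by
      rw [one_div, one_div] at this
      have := congrArg (·⁻¹) this
      simpa using this
    subst hq₀
    exact young_one hq₁ f g hgs
  rcases h₁R with h₁R | rfl
  swap
  · -- q₁ = 1 : q₀ = q₂, symmetric
    have : 1 / q₀ = 1 / q₂ := by
      have h' := hq
      rw [show (1:ℝ≥0∞)/1 = 1 by norm_num, add_comm 1 (1/q₂)] at h'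
      rw [ENNReal.add_left_inj (by simp : (1:ℝ≥0∞) ≠ ∞)] at h'
      exact h'
    have hq₀ : q₀ = q₂ := by
      rw [one_div, one_div] at this
      have := congrArg (·⁻¹) this
      simpa using this
    subst hq₀
    have e : (fun j => ∑' k, f (j - k) * g k) = fun j => ∑' k, g (j - k) * f k := by
      funext j; exact conv_symm f g j
    rw [e, mul_comm]
    exact young_one hq₂ g f hfs
  -- 1 < q₁, q₂ < ∞
  have hq₀0 : q₀ ≠ 0 := by
    rintro rfl
    rw [ENNReal.div_zero one_ne_zero] at hq
    have : (1:ℝ≥0∞) / q₁ + 1 / q₂ ≤ 1 + 1 := add_le_add hinv₁ hinv₂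
    rw [← hq] at this
    simp at this
  -- convert hq to reals
  have h1t : (1:ℝ≥0∞) / q₁ ≠ ∞ := by
    simp [one_div, ENNReal.inv_ne_top, hq₁0]
  have h2t : (1:ℝ≥0∞) / q₂ ≠ ∞ := by
    simp [one_div, ENNReal.inv_ne_top, hq₂0]
  have h0t : (1:ℝ≥0∞) / q₀ ≠ ∞ := by
    simp [one_div, ENNReal.inv_ne_top, hq₀0]
  have hqR : (1:ℝ)/q₀.toReal + 1 = 1/q₁.toReal + 1/q₂.toReal := by
    have := congrArg ENNReal.toReal hq
    rw [ENNReal.toReal_add h0t (by simp), ENNReal.toReal_add h1t h2t] at this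
    rw [ENNReal.toReal_div, ENNReal.toReal_div, ENNReal.toReal_div] at this
    simpa using this
  rcases eq_or_ne q₀ ∞ with rfl | h₀top
  · -- q₀ = ∞
    have hsum : 1 / q₁.toReal + 1 / q₂.toReal = 1 := by
      simp only [ENNReal.toReal_top] at hqR
      rw [← hqR]; norm_num
    exact young_conj h₁top h₂top h₁R hsum f g
  · have hrel : 1 / q₀.toReal = 1 / q₁.toReal + 1 / q₂.toReal - 1 := by linarith
    have hc0 : 0 < 1 / q₀.toReal := by
      have := ENNReal.toReal_pos hq₀0 h₀top
      positivity
    exact young_main f g hfs hgs hf hg h₀top h₁top h₂top h₁R h₂R hrel hc0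

lemma my_inv_min (a b : ℝ≥0∞) : (min a b)⁻¹ = max a⁻¹ b⁻¹ := by
  rcases le_total a b with h | h
  · rw [min_eq_left h, max_eq_left (ENNReal.inv_le_inv.2 h)]
  · rw [min_eq_right h, max_eq_right (ENNReal.inv_le_inv.2 h)]

/-- Quasi-Banach Young inequality in terms of `Np`. -/
lemma master (f g : G → ℝ≥0∞) (hfs : (support f).Finite) (hgs : (support g).Finite)
    (hf : ∀ j, f j ≠ ∞) (hg : ∀ j, g j ≠ ∞) {p₀ p₁ p₂ : ℝ≥0∞}
    (hp₀ : p₀ ≠ 0) (hp₁ : p₁ ≠ 0) (hp₂ : p₂ ≠ 0)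
    (hp : (1 / p₀).toReal ≤ (1 / p₁).toReal + (1 / p₂).toReal
      - max 1 (max (1 / p₁).toReal (1 / p₂).toReal)) :
    Np p₀ (fun j => ∑' k, f (j - k) * g k) ≤ Np p₁ f * Np p₂ g := by
  classical
  set t := min p₁ (min p₂ 1) with htdef
  have ht1 : t ≤ 1 := le_trans (min_le_right _ _) (min_le_right _ _)
  have ht0 : t ≠ 0 := by
    have : 0 < t := lt_min (pos_iff_ne_zero.2 hp₁) (lt_min (pos_iff_ne_zero.2 hp₂) one_pos)
    exact this.ne'
  have httop : t ≠ ∞ := (lt_of_le_of_lt ht1 (by simp)).ne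
  set τ := t.toReal with hτdef
  have hτ0 : 0 < τ := ENNReal.toReal_pos ht0 httop
  have hτ1 : τ ≤ 1 := by
    have := ENNReal.toReal_mono ENNReal.one_ne_top ht1
    simpa using this
  set r₀ := (1 / p₀).toReal with hr₀
  set r₁ := (1 / p₁).toReal with hr₁
  set r₂ := (1 / p₂).toReal with hr₂
  -- identify the max with (1/t).toReal
  have hmax : max 1 (max r₁ r₂) = τ⁻¹ := by
    have e1 : (1:ℝ≥0∞) / t = max (1/p₁) (max (1/p₂) 1) := by
      rw [htdef, one_div, my_inv_min, my_inv_min]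
      simp [one_div]
    have e2 : ((1:ℝ≥0∞) / t).toReal = max r₁ (max r₂ 1) := by
      rw [e1, ENNReal.toReal_max (by simp [one_div, hp₁])
          (max_lt (lt_top_iff_ne_top.2 (by simp [one_div, hp₂])) ENNReal.one_lt_top).ne,
        ENNReal.toReal_max (by simp [one_div, hp₂]) (by simp)]
      simp [hr₁, hr₂]
    have e3 : ((1:ℝ≥0∞) / t).toReal = τ⁻¹ := by
      rw [one_div, ENNReal.toReal_inv]
    rw [← e3, e2, max_comm, max_assoc]
  rw [hmax] at hp
  -- multiply through by τ
  have hmul : τ * r₀ ≤ τ * r₁ + τ * r₂ - 1 := by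
    have h2 := mul_le_mul_of_nonneg_left hp hτ0.le
    have h3 : τ * τ⁻¹ = 1 := mul_inv_cancel₀ hτ0.ne'
    nlinarith [h2, h3]
  have hr₀0 : 0 ≤ r₀ := ENNReal.toReal_nonneg
  have hτr₀ : 0 ≤ τ * r₀ := by positivity
  -- the scaled exponents
  set q₀ := p₀ / t with hq₀def
  set q₁ := p₁ / t with hq₁def
  set q₂ := p₂ / t with hq₂def
  have hq₁1 : 1 ≤ q₁ := by
    rw [hq₁def, ENNReal.le_div_iff_mul_le (Or.inl ht0) (Or.inl httop), one_mul]
    exact min_le_left _ _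
  have hq₂1 : 1 ≤ q₂ := by
    rw [hq₂def, ENNReal.le_div_iff_mul_le (Or.inl ht0) (Or.inl httop), one_mul]
    exact le_trans (min_le_right _ _) (min_le_left _ _)
  have hq₀0 : q₀ ≠ 0 := by
    rw [hq₀def, Ne, ENNReal.div_eq_zero_iff]
    push_neg
    exact ⟨hp₀, httop⟩
  have hq₁0 : q₁ ≠ 0 := fun h => by simp [h] at hq₁1
  have hq₂0 : q₂ ≠ 0 := fun h => by simp [h] at hq₂1
  have hsval : ∀ p : ℝ≥0∞, p ≠ 0 → (1 / (p / t)).toReal = τ * (1/p).toReal := by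
    intro p hp
    rw [one_div, ENNReal.inv_div (Or.inl httop) (Or.inl ht0), ENNReal.toReal_div,
      one_div, ENNReal.toReal_inv, div_eq_mul_inv]
  have hs₀ : (1 / q₀).toReal = τ * r₀ := hsval p₀ hp₀
  have hs₁ : (1 / q₁).toReal = τ * r₁ := hsval p₁ hp₁
  have hs₂ : (1 / q₂).toReal = τ * r₂ := hsval p₂ hp₂
  -- the exact Young exponent
  have hofr : ∀ q : ℝ≥0∞, q ≠ 0 → ENNReal.ofReal ((1/q).toReal) = 1 / q := by
    intro q hq
    exact ENNReal.ofReal_toReal (by simp [one_div, hq])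
  obtain ⟨Q, hQ0, hQrel, hQle⟩ :
      ∃ Q : ℝ≥0∞, Q ≠ 0 ∧ 1 / Q + 1 = 1 / q₁ + 1 / q₂ ∧ Q ≤ q₀ := by
    refine ⟨(ENNReal.ofReal (τ * r₁ + τ * r₂ - 1))⁻¹,
      ENNReal.inv_ne_zero.2 ENNReal.ofReal_ne_top, ?_, ?_⟩
    · rw [one_div, inv_inv]
      rw [← hofr q₁ hq₁0, ← hofr q₂ hq₂0, hs₁, hs₂]
      rw [← ENNReal.ofReal_one, ← ENNReal.ofReal_add (by linarith) (by norm_num),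
        ← ENNReal.ofReal_add (by positivity) (by positivity)]
      congr 1
      ring
    · have h1 : q₀⁻¹ ≤ ((ENNReal.ofReal (τ * r₁ + τ * r₂ - 1))⁻¹)⁻¹ := by
        rw [inv_inv, ← one_div q₀, ← hofr q₀ hq₀0, hs₀]
        exact ENNReal.ofReal_le_ofReal hmul
      exact ENNReal.inv_le_inv.1 h1
  -- function manipulations
  set fτ : G → ℝ≥0∞ := fun j => f j ^ τ with hfτ
  set gτ : G → ℝ≥0∞ := fun j => g j ^ τ with hgτ
  have hfτs : (support fτ).Finite := hfs.subset (fun j hj => by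
    simp only [mem_support, hfτ] at hj ⊢
    intro h; exact hj (by simp [h, ENNReal.zero_rpow_of_pos hτ0]))
  have hgτs : (support gτ).Finite := hgs.subset (fun j hj => by
    simp only [mem_support, hgτ] at hj ⊢
    intro h; exact hj (by simp [h, ENNReal.zero_rpow_of_pos hτ0]))
  have hfτt : ∀ j, fτ j ≠ ∞ := fun j => ENNReal.rpow_ne_top_of_nonneg hτ0.le (hf j)
  have hgτt : ∀ j, gτ j ≠ ∞ := fun j => ENNReal.rpow_ne_top_of_nonneg hτ0.le (hg j)
  have hconvpow : ∀ j : G, (∑' k, f (j - k) * g k) ^ τ ≤ ∑' k, fτ (j - k) * gτ k := by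
    intro j
    have hsupp : (support fun k => f (j - k) * g k).Finite := hgs.subset (fun k hk => by
      simp only [mem_support] at hk ⊢
      intro h; exact hk (by simp [h]))
    refine le_trans (rpow_tsum_le_tsum_rpow _ hτ0 hτ1 hsupp) (le_of_eq ?_)
    congr 1
    funext k
    exact ENNReal.mul_rpow_of_nonneg _ _ hτ0.le
  -- main chain
  have h1 : (Np p₀ (fun j => ∑' k, f (j - k) * g k)) ^ τ
      ≤ (Np p₁ f) ^ τ * (Np p₂ g) ^ τ := by
    calc (Np p₀ (fun j => ∑' k, f (j - k) * g k)) ^ τ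
        = Np q₀ (fun j => (∑' k, f (j - k) * g k) ^ τ) :=
          (Np_rpow hp₀ ht0 httop _).symm
      _ ≤ Np q₀ (fun j => ∑' k, fτ (j - k) * gτ k) := Np_mono hconvpow
      _ ≤ Np Q (fun j => ∑' k, fτ (j - k) * gτ k) := Np_anti hQ0 hQle _
      _ ≤ Np q₁ fτ * Np q₂ gτ := young fτ gτ hfτs hgτs hfτt hgτt hq₁1 hq₂1 hQrel
      _ = (Np p₁ f) ^ τ * (Np p₂ g) ^ τ := by
          rw [hq₁def, hq₂def, hfτ, hgτ, Np_rpow hp₁ ht0 httop, Np_rpow hp₂ ht0 httop]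
  calc Np p₀ (fun j => ∑' k, f (j - k) * g k)
      = ((Np p₀ (fun j => ∑' k, f (j - k) * g k)) ^ τ) ^ τ⁻¹ := by
        rw [ENNReal.rpow_rpow_inv hτ0.ne']
    _ ≤ ((Np p₁ f) ^ τ * (Np p₂ g) ^ τ) ^ τ⁻¹ :=
        ENNReal.rpow_le_rpow h1 (by positivity)
    _ = Np p₁ f * Np p₂ g := by
        rw [ENNReal.mul_rpow_of_nonneg _ _ (by positivity : (0:ℝ) ≤ τ⁻¹),
          ENNReal.rpow_rpow_inv hτ0.ne', ENNReal.rpow_rpow_inv hτ0.ne']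

end group

lemma lqNorm_eq_Np {ι : Type*} (a : ι → ℂ) {p : ℝ≥0∞} (hp : p ≠ 0) :
    lqNorm a p = Np p (fun j => (‖a j‖₊ : ℝ≥0∞)) := by
  unfold lqNorm
  letI : MeasurableSpace ι := ⊤
  haveI : MeasurableSingletonClass ι := ⟨fun _ => MeasurableSpace.measurableSet_top⟩
  rcases eq_or_ne p ∞ with rfl | htop
  · rw [eLpNorm_exponent_top, eLpNormEssSup_count, Np_top]; rfl
  · rw [eLpNorm_eq_lintegral_rpow_enorm_toReal hp htop, lintegral_count, Np_of_ne_top htop]; rfl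

theorem stmt7 {d : ℕ} (b : Module.Basis (Fin d) ℝ (EuclideanSpace ℝ (Fin d)))
    (ω₀ ω₁ ω₂ : AddSubgroup.closure (Set.range ⇑b) → ℝ)
    (hω : ∀ j, 0 < ω₀ j ∧ 0 < ω₁ j ∧ 0 < ω₂ j)
    (hω₀ : ∀ j₁ j₂, ω₀ (j₁ + j₂) ≤ ω₁ j₁ * ω₂ j₂)
    (p₀ p₁ p₂ : ℝ≥0∞) (hp₀ : 0 < p₀) (hp₁ : 0 < p₁) (hp₂ : 0 < p₂)
    (hp : (1 / p₀).toReal ≤ (1 / p₁).toReal + (1 / p₂).toReal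
      - max 1 (max (1 / p₁).toReal (1 / p₂).toReal))
    (a₁ a₂ : AddSubgroup.closure (Set.range ⇑b) → ℂ)
    (ha₁ : (Function.support a₁).Finite) (ha₂ : (Function.support a₂).Finite) :
    lqNorm (fun j => (ω₀ j : ℂ) * ∑' k, a₁ (j - k) * a₂ k) p₀ ≤
      lqNorm (fun j => (ω₁ j : ℂ) * a₁ j) p₁ * lqNorm (fun j => (ω₂ j : ℂ) * a₂ j) p₂ := by
  classical
  have hF₁s : (support fun j => ((‖(ω₁ j : ℂ) * a₁ j‖₊ : ℝ≥0) : ℝ≥0∞)).Finite :=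
    ha₁.subset (fun j hj => by
      simp only [mem_support] at hj ⊢
      intro h; exact hj (by simp [h]))
  have hF₂s : (support fun j => ((‖(ω₂ j : ℂ) * a₂ j‖₊ : ℝ≥0) : ℝ≥0∞)).Finite :=
    ha₂.subset (fun j hj => by
      simp only [mem_support] at hj ⊢
      intro h; exact hj (by simp [h]))
  -- pointwise bound
  have hpoint : ∀ j, ((‖(ω₀ j : ℂ) * ∑' k, a₁ (j - k) * a₂ k‖₊ : ℝ≥0) : ℝ≥0∞)
      ≤ ∑' k, ((‖(ω₁ (j - k) : ℂ) * a₁ (j - k)‖₊ : ℝ≥0) : ℝ≥0∞) *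
          ((‖(ω₂ k : ℂ) * a₂ k‖₊ : ℝ≥0) : ℝ≥0∞) := by
    intro j
    have hsum : (∑' k, a₁ (j - k) * a₂ k) = ∑ k ∈ ha₂.toFinset, a₁ (j - k) * a₂ k := by
      refine tsum_eq_sum fun k hk => ?_
      have : a₂ k = 0 := by
        by_contra h; exact hk (ha₂.mem_toFinset.2 (mem_support.mpr h))
      rw [this, mul_zero]
    have h1 : ((‖(ω₀ j : ℂ) * ∑' k, a₁ (j - k) * a₂ k‖₊ : ℝ≥0) : ℝ≥0∞)
        ≤ ∑ k ∈ ha₂.toFinset,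
            ((‖(ω₀ j : ℂ)‖₊ : ℝ≥0∞) * ((‖a₁ (j - k)‖₊ : ℝ≥0∞) * (‖a₂ k‖₊ : ℝ≥0∞))) := by
      rw [hsum, nnnorm_mul, ENNReal.coe_mul, ← Finset.mul_sum]
      refine mul_le_mul_right ?_ _
      calc ((‖∑ k ∈ ha₂.toFinset, a₁ (j - k) * a₂ k‖₊ : ℝ≥0) : ℝ≥0∞)
          = (((‖∑ k ∈ ha₂.toFinset, a₁ (j - k) * a₂ k‖₊ : ℝ≥0)) : ℝ≥0∞) := rfl
        _ ≤ ((∑ k ∈ ha₂.toFinset, ‖a₁ (j - k) * a₂ k‖₊ : ℝ≥0) : ℝ≥0∞) :=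
            ENNReal.coe_le_coe.2 (nnnorm_sum_le _ _)
        _ = ∑ k ∈ ha₂.toFinset, ((‖a₁ (j - k)‖₊ : ℝ≥0∞) * (‖a₂ k‖₊ : ℝ≥0∞)) := by
            rw [ENNReal.coe_finset_sum]
            refine Finset.sum_congr rfl fun k _ => ?_
            rw [nnnorm_mul, ENNReal.coe_mul]
    have h2 : ∀ k, (‖(ω₀ j : ℂ)‖₊ : ℝ≥0∞) * ((‖a₁ (j - k)‖₊ : ℝ≥0∞) * (‖a₂ k‖₊ : ℝ≥0∞))
        ≤ ((‖(ω₁ (j - k) : ℂ) * a₁ (j - k)‖₊ : ℝ≥0) : ℝ≥0∞) *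
          ((‖(ω₂ k : ℂ) * a₂ k‖₊ : ℝ≥0) : ℝ≥0∞) := by
      intro k
      have hw := hω₀ (j - k) k
      rw [sub_add_cancel] at hw
      have hnorm : ‖ω₀ j‖₊ ≤ ‖ω₁ (j - k) * ω₂ k‖₊ := by
        have habs : ‖ω₀ j‖ ≤ ‖ω₁ (j - k) * ω₂ k‖ := by
          rw [Real.norm_eq_abs, Real.norm_eq_abs, abs_of_pos (hω j).1,
            abs_of_pos (mul_pos (hω (j - k)).2.1 (hω k).2.2)]
          exact hw
        rwa [← coe_nnnorm, ← coe_nnnorm, NNReal.coe_le_coe] at habs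
      have h3 : (‖(ω₀ j : ℂ)‖₊ : ℝ≥0∞) ≤ (‖(ω₁ (j - k) : ℂ)‖₊ : ℝ≥0∞) * (‖(ω₂ k : ℂ)‖₊ : ℝ≥0∞) := by
        rw [Complex.nnnorm_real, Complex.nnnorm_real, Complex.nnnorm_real,
          ← ENNReal.coe_mul, ENNReal.coe_le_coe, ← nnnorm_mul]
        exact hnorm
      calc (‖(ω₀ j : ℂ)‖₊ : ℝ≥0∞) * ((‖a₁ (j - k)‖₊ : ℝ≥0∞) * (‖a₂ k‖₊ : ℝ≥0∞))
          ≤ ((‖(ω₁ (j - k) : ℂ)‖₊ : ℝ≥0∞) * (‖(ω₂ k : ℂ)‖₊ : ℝ≥0∞)) *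
            ((‖a₁ (j - k)‖₊ : ℝ≥0∞) * (‖a₂ k‖₊ : ℝ≥0∞)) := mul_le_mul_left h3 _
        _ = ((‖(ω₁ (j - k) : ℂ) * a₁ (j - k)‖₊ : ℝ≥0) : ℝ≥0∞) *
            ((‖(ω₂ k : ℂ) * a₂ k‖₊ : ℝ≥0) : ℝ≥0∞) := by
            rw [nnnorm_mul, nnnorm_mul, ENNReal.coe_mul, ENNReal.coe_mul]
            ring
    calc ((‖(ω₀ j : ℂ) * ∑' k, a₁ (j - k) * a₂ k‖₊ : ℝ≥0) : ℝ≥0∞)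
        ≤ ∑ k ∈ ha₂.toFinset,
            ((‖(ω₀ j : ℂ)‖₊ : ℝ≥0∞) * ((‖a₁ (j - k)‖₊ : ℝ≥0∞) * (‖a₂ k‖₊ : ℝ≥0∞))) := h1
      _ ≤ ∑ k ∈ ha₂.toFinset, ((‖(ω₁ (j - k) : ℂ) * a₁ (j - k)‖₊ : ℝ≥0) : ℝ≥0∞) *
            ((‖(ω₂ k : ℂ) * a₂ k‖₊ : ℝ≥0) : ℝ≥0∞) := Finset.sum_le_sum fun k _ => h2 k
      _ ≤ ∑' k, ((‖(ω₁ (j - k) : ℂ) * a₁ (j - k)‖₊ : ℝ≥0) : ℝ≥0∞) *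
            ((‖(ω₂ k : ℂ) * a₂ k‖₊ : ℝ≥0) : ℝ≥0∞) := ENNReal.sum_le_tsum _
  rw [lqNorm_eq_Np _ hp₀.ne', lqNorm_eq_Np _ hp₁.ne', lqNorm_eq_Np _ hp₂.ne']
  refine le_trans (Np_mono hpoint) ?_
  exact master _ _ hF₁s hF₂s (fun j => ENNReal.coe_ne_top) (fun j => ENNReal.coe_ne_top)
    hp₀.ne' hp₁.ne' hp₂.ne' hp
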